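/- Suppose 0 < r ≤ d, σ > 0, K > 0, k* > K, and 0 < δ ≤ (k* − K)(K/k*)^{λ/σ − κ}. Let v be given on (K, k*) by v(x) := (k* − K)(k*/x)^κ·((K/x)^{−λ/σ} − (K/x)^{λ/σ})/D + δ(K/x)^κ·((k*/x)^{λ/σ} − (k*/x)^{−λ/σ})/D with D := (k*/K)^{λ/σ} − (k*/K)^{−λ/σ}. Then v″(x) > 0 for every x ∈ (K, k*), i.e. v is strictly convex on (K, k*). (This follows since v″(x) = (2/(σ²x²))[(d − r)x·v′(x) + r·v(x)], v′ ≥ 0 and v > 0 on (K, k*).) -/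

import Mathlib

set_option maxHeartbeats 1000000

noncomputable section

private lemma aux_lt_of_sq (L c : ℝ) (hL0 : 0 < L) (h : c ^ 2 < L ^ 2) : c < L := by
  nlinarith

private lemma aux_coef1 (δ kK p q u w : ℝ) (hδ : 0 < δ) (hkK : 0 < kK)
    (hp : 0 < p) (hq : 0 < q) (hu : 0 < u) (hw : 0 < w) (hpq : p < q)
    (h2 : δ * (q * u) ≤ kK * (p * w)) : δ * u * p < kK * w * q := by
  have h3 : δ * u * p * q ≤ kK * (p * w) * p := by
    nlinarith [mul_le_mul_of_nonneg_right h2 hp.le]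
  have hpp : p * p < q * q := by nlinarith [hpq, hp]
  have h4 : kK * (p * w) * p < kK * w * q * q := by
    nlinarith [mul_lt_mul_of_pos_left hpp (mul_pos hkK hw)]
  have h5 : δ * u * p * q < kK * w * q * q := by linarith
  exact lt_of_mul_lt_mul_right h5 hq.le

private lemma aux_pos_of_mul_eq (E P R : ℝ) (hP : 0 < P) (hR : 0 < R) (h : E * P = R) :
    0 < E := by
  by_contra hE
  push_neg at hE
  nlinarith

/-- For `0 < r ≤ d` and `0 < δ ≤ (k* − K)(K/k*)^{λ/σ − κ}`, the candidate value function `v`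
is strictly convex on `(K, k*)`. -/
theorem candidate_strictly_convex_middle (r d σ K δ : ℝ)
    (hr : 0 < r) (hrd : r ≤ d) (hσ : 0 < σ) (hK : 0 < K) (hδ : 0 < δ)
    (lam κ : ℝ)
    (hlam : lam = Real.sqrt (2 * r + ((r - d - σ ^ 2 / 2) / σ) ^ 2))
    (hκ : κ = (r - d - σ ^ 2 / 2) / σ ^ 2)
    (k : ℝ) (hk : K < k)
    (hδle : δ ≤ (k - K) * (K / k) ^ (lam / σ - κ))
    (D : ℝ) (hD : D = (k / K) ^ (lam / σ) - (k / K) ^ (-(lam / σ)))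
    (v : ℝ → ℝ)
    (hv : v = fun x =>
      (k - K) * (k / x) ^ κ * (((K / x) ^ (-(lam / σ)) - (K / x) ^ (lam / σ)) / D) +
        δ * (K / x) ^ κ * (((k / x) ^ (lam / σ) - (k / x) ^ (-(lam / σ))) / D)) :
    ∀ x ∈ Set.Ioo K k, 0 < deriv (deriv v) x := by
  intro x hx
  obtain ⟨hxK, hxk⟩ := hx
  set L := lam / σ with hLdef
  clear_value L
  have hk0 : (0:ℝ) < k := hK.trans hk
  have hx0 : (0:ℝ) < x := hK.trans hxK
  have hσ2 : (0:ℝ) < σ ^ 2 := by positivity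
  -- algebraic facts about κ and L
  have hκσ : σ ^ 2 * κ = r - d - σ ^ 2 / 2 := by rw [hκ]; field_simp
  have harg : (r - d - σ ^ 2 / 2) / σ = σ * κ := by rw [hκ]; field_simp
  have hlam2 : lam ^ 2 = 2 * r + (σ * κ) ^ 2 := by
    rw [hlam, harg, Real.sq_sqrt (by positivity)]
  have hlampos : 0 < lam := by
    rw [hlam]; exact Real.sqrt_pos.mpr (by positivity)
  have hL0 : 0 < L := by rw [hLdef]; exact div_pos hlampos hσ
  have hLσ : L * σ = lam := by rw [hLdef]; field_simp
  have hL2 : σ ^ 2 * L ^ 2 = 2 * r + σ ^ 2 * κ ^ 2 := by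
    linear_combination hlam2 + (L * σ + lam) * hLσ
  have hκsq : κ ^ 2 < L ^ 2 := by
    have h1 : σ ^ 2 * κ ^ 2 < σ ^ 2 * L ^ 2 := by linarith
    exact lt_of_mul_lt_mul_left h1 hσ2.le
  have hκL : κ < L := aux_lt_of_sq L κ hL0 hκsq
  have hκL' : -L < κ := by
    have := aux_lt_of_sq L (-κ) hL0 (by rw [neg_pow]; simpa using hκsq)
    linarith
  have hd0 : (0:ℝ) < d := lt_of_lt_of_le hr hrd
  have hL1 : σ ^ 2 * L ^ 2 = σ ^ 2 * (1 + κ) ^ 2 + 2 * d := by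
    linear_combination hL2 - 2 * hκσ
  have hsq2 : (1 + κ) ^ 2 < L ^ 2 := by
    have h2 : σ ^ 2 * (1 + κ) ^ 2 < σ ^ 2 * L ^ 2 := by linarith
    exact lt_of_mul_lt_mul_left h2 hσ2.le
  have ha1 : 1 < L - κ := by
    have := aux_lt_of_sq L (1 + κ) hL0 hsq2
    linarith
  have hb0 : -L - κ < 0 := by linarith
  -- the quadratic identities
  have hqa : σ ^ 2 / 2 * ((L - κ) * ((L - κ) - 1)) = r + (d - r) * (L - κ) := by
    linear_combination (1/2) * hL2 + (κ - L) * hκσ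
  have hqb : σ ^ 2 / 2 * ((-L - κ) * ((-L - κ) - 1)) = r + (d - r) * (-L - κ) := by
    linear_combination (1/2) * hL2 + (κ + L) * hκσ
  -- power atoms
  have hKL0 : 0 < K ^ L := Real.rpow_pos_of_pos hK L
  have hkL0 : 0 < k ^ L := Real.rpow_pos_of_pos hk0 L
  have hKκ0 : 0 < K ^ κ := Real.rpow_pos_of_pos hK κ
  have hkκ0 : 0 < k ^ κ := Real.rpow_pos_of_pos hk0 κ
  have hpq : K ^ L < k ^ L := Real.rpow_lt_rpow hK.le hk hL0
  have hDpos : 0 < D := by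
    rw [hD]
    have h1 : (k / K) ^ (-L) < (k / K) ^ L :=
      Real.rpow_lt_rpow_of_exponent_lt ((one_lt_div hK).mpr hk) (by linarith)
    linarith
  have hDne : D ≠ 0 := hDpos.ne'
  -- the constraint on δ, in cleared form
  have hsp : (K / k) ^ (L - κ) = (K ^ L * k ^ κ) / (k ^ L * K ^ κ) := by
    rw [Real.rpow_sub (div_pos hK hk0), Real.div_rpow hK.le hk0.le, Real.div_rpow hK.le hk0.le]
    have h1 := hkL0.ne'
    have h2 := hKκ0.ne'
    have h3 := hkκ0.ne'
    field_simp
  have hδ2 : δ * (k ^ L * K ^ κ) ≤ (k - K) * (K ^ L * k ^ κ) := by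
    rw [hsp, ← mul_div_assoc] at hδle
    exact (le_div_iff₀ (by positivity)).mp hδle
  -- the coefficients
  set C1 := ((k - K) * k ^ κ / K ^ L - δ * K ^ κ / k ^ L) / D with hC1def
  clear_value C1
  set C2 := (δ * K ^ κ * k ^ L - (k - K) * k ^ κ * K ^ L) / D with hC2def
  clear_value C2
  have hC1 : 0 < C1 := by
    rw [hC1def]
    apply div_pos _ hDpos
    rw [sub_pos, div_lt_div_iff₀ hkL0 hKL0]
    exact aux_coef1 δ (k - K) (K ^ L) (k ^ L) (K ^ κ) (k ^ κ) hδ (sub_pos.mpr hk)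
      hKL0 hkL0 hKκ0 hkκ0 hpq hδ2
  have hC2 : C2 ≤ 0 := by
    rw [hC2def]
    apply div_nonpos_of_nonpos_of_nonneg _ hDpos.le
    linarith [hδ2]
  -- v agrees with the two-power function on (0, ∞)
  have hveq : ∀ y ∈ Set.Ioi (0:ℝ), v y = C1 * y ^ (L - κ) + C2 * y ^ (-L - κ) := by
    intro y hy
    have hy0 : (0:ℝ) < y := hy
    have e1 : (k / y) ^ κ = k ^ κ / y ^ κ := Real.div_rpow hk0.le hy0.le κ
    have e2 : (K / y) ^ κ = K ^ κ / y ^ κ := Real.div_rpow hK.le hy0.le κ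
    have e3 : (K / y) ^ L = K ^ L / y ^ L := Real.div_rpow hK.le hy0.le L
    have e4 : (k / y) ^ L = k ^ L / y ^ L := Real.div_rpow hk0.le hy0.le L
    have e5 : (K / y) ^ (-L) = y ^ L / K ^ L := by
      rw [Real.rpow_neg (div_pos hK hy0).le, e3, inv_div]
    have e6 : (k / y) ^ (-L) = y ^ L / k ^ L := by
      rw [Real.rpow_neg (div_pos hk0 hy0).le, e4, inv_div]
    have e7 : y ^ (L - κ) = y ^ L / y ^ κ := Real.rpow_sub hy0 L κ
    have e8 : y ^ (-L - κ) = (y ^ L * y ^ κ)⁻¹ := by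
      rw [show -L - κ = -(L + κ) by ring, Real.rpow_neg hy0.le, Real.rpow_add hy0]
    have hyL := (Real.rpow_pos_of_pos hy0 L).ne'
    have hyκ := (Real.rpow_pos_of_pos hy0 κ).ne'
    have h1 := hkL0.ne'
    have h2 := hKL0.ne'
    simp only [hv]
    rw [e1, e2, e3, e4, e5, e6, e7, e8, hC1def, hC2def]
    field_simp
    ring
  -- first derivative on (0, ∞)
  have hvderiv : ∀ y ∈ Set.Ioi (0:ℝ), deriv v y =
      C1 * ((L - κ) * y ^ (L - κ - 1)) + C2 * ((-L - κ) * y ^ (-L - κ - 1)) := by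
    intro y hy
    have hy0 : (0:ℝ) < y := hy
    have heq : v =ᶠ[nhds y] (fun z => C1 * z ^ (L - κ) + C2 * z ^ (-L - κ)) :=
      Filter.eventuallyEq_of_mem (isOpen_Ioi.mem_nhds hy) hveq
    rw [heq.deriv_eq]
    exact (((Real.hasDerivAt_rpow_const (p := L - κ) (Or.inl hy0.ne')).const_mul C1).add
      ((Real.hasDerivAt_rpow_const (p := -L - κ) (Or.inl hy0.ne')).const_mul C2)).deriv
  -- second derivative at x
  have h2 : deriv v =ᶠ[nhds x]
      (fun y => C1 * ((L - κ) * y ^ (L - κ - 1)) + C2 * ((-L - κ) * y ^ (-L - κ - 1))) :=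
    Filter.eventuallyEq_of_mem (isOpen_Ioi.mem_nhds hx0) hvderiv
  rw [h2.deriv_eq]
  have hd2 : HasDerivAt
      (fun y => C1 * ((L - κ) * y ^ (L - κ - 1)) + C2 * ((-L - κ) * y ^ (-L - κ - 1)))
      (C1 * ((L - κ) * ((L - κ - 1) * x ^ (L - κ - 1 - 1))) +
        C2 * ((-L - κ) * ((-L - κ - 1) * x ^ (-L - κ - 1 - 1)))) x :=
    (((Real.hasDerivAt_rpow_const (p := L - κ - 1) (Or.inl hx0.ne')).const_mul (L - κ)).const_mul
        C1).add
      (((Real.hasDerivAt_rpow_const (p := -L - κ - 1) (Or.inl hx0.ne')).const_mul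
        (-L - κ)).const_mul C2)
  rw [hd2.deriv]
  -- positivity of v at x
  have hXpos : 0 < x ^ (L - κ) := Real.rpow_pos_of_pos hx0 _
  have hYpos : 0 < x ^ (-L - κ) := Real.rpow_pos_of_pos hx0 _
  have hvx : 0 < C1 * x ^ (L - κ) + C2 * x ^ (-L - κ) := by
    rw [← hveq x hx0]
    simp only [hv]
    have t1 : (K / x) ^ L < (K / x) ^ (-L) :=
      Real.rpow_lt_rpow_of_exponent_gt (div_pos hK hx0) ((div_lt_one hx0).mpr hxK) (by linarith)
    have t2 : (k / x) ^ (-L) < (k / x) ^ L :=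
      Real.rpow_lt_rpow_of_exponent_lt ((one_lt_div hx0).mpr hxk) (by linarith)
    apply add_pos
    · exact mul_pos (mul_pos (sub_pos.mpr hk) (Real.rpow_pos_of_pos (div_pos hk0 hx0) κ))
        (div_pos (sub_pos.mpr t1) hDpos)
    · exact mul_pos (mul_pos hδ (Real.rpow_pos_of_pos (div_pos hK hx0) κ))
        (div_pos (sub_pos.mpr t2) hDpos)
  -- positivity of the first-derivative combination
  have hv1 : 0 < C1 * (L - κ) * x ^ (L - κ) + C2 * (-L - κ) * x ^ (-L - κ) := by
    have h1 : 0 < C1 * (L - κ) * x ^ (L - κ) :=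
      mul_pos (mul_pos hC1 (by linarith)) hXpos
    have h2' : 0 ≤ C2 * (-L - κ) * x ^ (-L - κ) := by
      have e : C2 * (-L - κ) = (-C2) * (L + κ) := by ring
      exact mul_nonneg (by rw [e]; exact mul_nonneg (by linarith) (by linarith)) hYpos.le
    linarith
  -- relate the second-derivative expression to v and v'
  have hsq : x ^ (2:ℝ) = x * x := by
    rw [show (2:ℝ) = ((2:ℕ):ℝ) by norm_num, Real.rpow_natCast]; ring
  have r1 : x ^ (L - κ) = x ^ (L - κ - 1 - 1) * (x * x) := by
    rw [← hsq, ← Real.rpow_add hx0, show L - κ - 1 - 1 + 2 = L - κ by ring]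
  have r2 : x ^ (-L - κ) = x ^ (-L - κ - 1 - 1) * (x * x) := by
    rw [← hsq, ← Real.rpow_add hx0, show -L - κ - 1 - 1 + 2 = -L - κ by ring]
  have key : (C1 * ((L - κ) * ((L - κ - 1) * x ^ (L - κ - 1 - 1))) +
        C2 * ((-L - κ) * ((-L - κ - 1) * x ^ (-L - κ - 1 - 1)))) * (σ ^ 2 / 2 * (x * x)) =
      r * (C1 * x ^ (L - κ) + C2 * x ^ (-L - κ)) +
        (d - r) * (C1 * (L - κ) * x ^ (L - κ) + C2 * (-L - κ) * x ^ (-L - κ)) := by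
    rw [r1, r2]
    linear_combination (C1 * x ^ (L - κ - 1 - 1) * (x * x)) * hqa +
      (C2 * x ^ (-L - κ - 1 - 1) * (x * x)) * hqb
  have hrhs : 0 < r * (C1 * x ^ (L - κ) + C2 * x ^ (-L - κ)) +
      (d - r) * (C1 * (L - κ) * x ^ (L - κ) + C2 * (-L - κ) * x ^ (-L - κ)) := by
    have ha := mul_pos hr hvx
    have hb := mul_nonneg (sub_nonneg.mpr hrd) hv1.le
    linarith
  exact aux_pos_of_mul_eq _ _ _ (by positivity) hrhs key

end
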